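/- Let ξ, ζ ∈ ℝ and set ζ⁺ = 3 − ζ and ξ⁺ = ξ + ζ⁺. Suppose η : (0, ∞) → ℝ is differentiable, η(ε) ≠ −1 for all ε > 0, and η satisfies the Riccati equation 3ε² η'(ε) + η(ε)² + (1 − ζ⁺ ε) η(ε) − ξ⁺ ε = 0 for all ε > 0. Define g(ε) = ξ ε/(1 + η(ε)). Then g is differentiable and satisfies 3ε² g'(ε) + g(ε)² + (1 − ζ ε) g(ε) − ξ ε = 0 for all ε > 0. -/

import Mathlib

/-- Propagation of Riccati equations along the continued-fraction recursion
`ηₙ = ξₙ ε/(1 + η_{n+1})`: if `η` satisfies the Riccati equation with parameters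
`(ξ⁺, ζ⁺) = (ξ + (3 − ζ), 3 − ζ)`, then `g(ε) = ξε/(1 + η(ε))` satisfies the one
with parameters `(ξ, ζ)`. -/
theorem statement16 (ξ ζ : ℝ) (η : ℝ → ℝ)
    (hdiff : ∀ ε : ℝ, 0 < ε → DifferentiableAt ℝ η ε)
    (hne : ∀ ε : ℝ, 0 < ε → η ε ≠ -1)
    (hric : ∀ ε : ℝ, 0 < ε →
      3 * ε^2 * deriv η ε + (η ε)^2 + (1 - (3 - ζ) * ε) * η ε - (ξ + (3 - ζ)) * ε = 0) :
    ∀ ε : ℝ, 0 < ε →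
      DifferentiableAt ℝ (fun e : ℝ => ξ * e / (1 + η e)) ε ∧
      3 * ε^2 * deriv (fun e : ℝ => ξ * e / (1 + η e)) ε
        + (ξ * ε / (1 + η ε))^2 + (1 - ζ * ε) * (ξ * ε / (1 + η ε)) - ξ * ε = 0 := by
  intro ε hε
  have hd : (1 : ℝ) + η ε ≠ 0 := by
    intro h
    exact hne ε hε (by linarith)
  have hnum : DifferentiableAt ℝ (fun e : ℝ => ξ * e) ε := by fun_prop
  have hden : DifferentiableAt ℝ (fun e : ℝ => 1 + η e) ε :=
    (differentiableAt_const _).add (hdiff ε hε)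
  have hg : DifferentiableAt ℝ (fun e : ℝ => ξ * e / (1 + η e)) ε :=
    hnum.div hden hd
  refine ⟨hg, ?_⟩
  have hderiv : deriv (fun e : ℝ => ξ * e / (1 + η e)) ε
      = (ξ * (1 + η ε) - ξ * ε * deriv η ε) / (1 + η ε)^2 := by
    rw [deriv_fun_div hnum hden hd]
    have h1 : deriv (fun e : ℝ => ξ * e) ε = ξ := by
      rw [deriv_const_mul ξ differentiableAt_fun_id]; simp
    have h2 : deriv (fun e : ℝ => 1 + η e) ε = deriv η ε := by
      simp
    rw [h1, h2]
  rw [hderiv]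
  have h := hric ε hε
  have hε2 : ε ≠ 0 := ne_of_gt hε
  have hη' : deriv η ε = -((η ε)^2 + (1 - (3 - ζ) * ε) * η ε - (ξ + (3 - ζ)) * ε) / (3 * ε^2) := by
    field_simp
    linarith
  rw [hη']
  field_simp
  ring
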